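/- Let S be a finite subset of ℤ^d with S = −S and 0 ∉ S which generates ℤ^d, with word-length ℓ_S. Let σ : ℝ^d → ℝ be a linear functional with σ(s) ≤ 1 for all s ∈ S such that F = {s ∈ S : σ(s) = 1} is nonempty, let z_F = Σ_{s∈F} s and let G_F be the subgroup generated by F. Then for every y ∈ ℤ^d and every u ∈ G_F, the integer sequences n ↦ ℓ_S(n·z_F) − ℓ_S(n·z_F − y) and n ↦ ℓ_S(n·z_F) − ℓ_S(n·z_F − y − u) are eventually constant, and their eventual values m(y) and m(y+u) satisfy m(y+u) = m(y) + σ(u). -/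

import Mathlib

/-- The word-length of `x ∈ ℤ^d` with respect to a generating set `S`: the least `n ≥ 0`
such that `x` is a sum of `n` (not necessarily distinct) elements of `S`. -/
noncomputable def wordLength {d : ℕ} (S : Finset (Fin d → ℤ)) (x : Fin d → ℤ) : ℕ :=
  sInf {n : ℕ | ∃ g : Fin n → (Fin d → ℤ), (∀ i, g i ∈ S) ∧ ∑ i, g i = x}

section Aux

variable {d : ℕ} (S : Finset (Fin d → ℤ))

/-- casting map ℤ^d → ℝ^d as an additive hom -/
def icastHom (d : ℕ) : (Fin d → ℤ) →+ (Fin d → ℝ) where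
  toFun x := fun i => (x i : ℝ)
  map_zero' := by funext i; simp
  map_add' x y := by funext i; push_cast; simp

lemma wl_le {n : ℕ} {g : Fin n → (Fin d → ℤ)} {x : Fin d → ℤ}
    (hg : ∀ i, g i ∈ S) (hsum : ∑ i, g i = x) : wordLength S x ≤ n :=
  Nat.sInf_le ⟨g, hg, hsum⟩

lemma wl_rep_exists (hSsym : ∀ s ∈ S, -s ∈ S)
    (hSgen : AddSubgroup.closure (S : Set (Fin d → ℤ)) = ⊤) (x : Fin d → ℤ) :
    ∃ n : ℕ, ∃ g : Fin n → (Fin d → ℤ), (∀ i, g i ∈ S) ∧ ∑ i, g i = x := by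
  have hx : x ∈ AddSubgroup.closure (S : Set (Fin d → ℤ)) := by rw [hSgen]; trivial
  induction hx using AddSubgroup.closure_induction with
  | mem s hs => exact ⟨1, fun _ => s, fun _ => hs, by simp⟩
  | zero => exact ⟨0, fun i => i.elim0, fun i => i.elim0, by simp⟩
  | add a b _ _ ha hb =>
    obtain ⟨n, g, hg, hgs⟩ := ha
    obtain ⟨m, h, hh, hhs⟩ := hb
    refine ⟨n + m, Fin.append g h, fun i => ?_, ?_⟩
    · induction i using Fin.addCases with
      | left i => rw [Fin.append_left]; exact hg i
      | right i => rw [Fin.append_right]; exact hh i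
    · rw [Fin.sum_univ_add]
      simp only [Fin.append_left, Fin.append_right, hgs, hhs]
  | neg a _ ha =>
    obtain ⟨n, g, hg, hgs⟩ := ha
    exact ⟨n, fun i => -(g i), fun i => hSsym _ (hg i), by
      simp only [Finset.sum_neg_distrib, hgs]⟩

lemma wl_spec (hSsym : ∀ s ∈ S, -s ∈ S)
    (hSgen : AddSubgroup.closure (S : Set (Fin d → ℤ)) = ⊤) (x : Fin d → ℤ) :
    ∃ g : Fin (wordLength S x) → (Fin d → ℤ), (∀ i, g i ∈ S) ∧ ∑ i, g i = x := by
  have h : wordLength S x ∈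
      {n : ℕ | ∃ g : Fin n → (Fin d → ℤ), (∀ i, g i ∈ S) ∧ ∑ i, g i = x} := by
    apply Nat.sInf_mem
    obtain ⟨n, g, hg, hs⟩ := wl_rep_exists S hSsym hSgen x
    exact ⟨n, g, hg, hs⟩
  exact h

lemma wl_add (hSsym : ∀ s ∈ S, -s ∈ S)
    (hSgen : AddSubgroup.closure (S : Set (Fin d → ℤ)) = ⊤) (x y : Fin d → ℤ) :
    wordLength S (x + y) ≤ wordLength S x + wordLength S y := by
  obtain ⟨g, hg, hgs⟩ := wl_spec S hSsym hSgen x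
  obtain ⟨h, hh, hhs⟩ := wl_spec S hSsym hSgen y
  refine wl_le S (g := Fin.append g h) (fun i => ?_) ?_
  · induction i using Fin.addCases with
    | left i => rw [Fin.append_left]; exact hg i
    | right i => rw [Fin.append_right]; exact hh i
  · rw [Fin.sum_univ_add]
    simp only [Fin.append_left, Fin.append_right, hgs, hhs]

lemma wl_zero : wordLength S 0 = 0 :=
  Nat.le_zero.mp (wl_le S (g := fun i : Fin 0 => i.elim0) (fun i => i.elim0) (by simp))

lemma wl_nsmul_le {s : Fin d → ℤ} (hs : s ∈ S) (k : ℕ) : wordLength S (k • s) ≤ k :=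
  wl_le S (g := fun _ : Fin k => s) (fun _ => hs) (by simp)

lemma wl_sum_smul_le {F : Finset (Fin d → ℤ)} (hFS : ∀ s ∈ F, s ∈ S) (c : (Fin d → ℤ) → ℕ)
    (hSsym : ∀ s ∈ S, -s ∈ S)
    (hSgen : AddSubgroup.closure (S : Set (Fin d → ℤ)) = ⊤) :
    wordLength S (∑ s ∈ F, c s • s) ≤ ∑ s ∈ F, c s := by
  classical
  induction F using Finset.induction with
  | empty => simp [wl_zero]
  | @insert a T hnotmem ih =>
    rw [Finset.sum_insert hnotmem, Finset.sum_insert hnotmem]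
    calc wordLength S (c a • a + ∑ s ∈ T, c s • s)
        ≤ wordLength S (c a • a) + wordLength S (∑ s ∈ T, c s • s) :=
          wl_add S hSsym hSgen _ _
      _ ≤ c a + ∑ s ∈ T, c s := by
          gcongr
          · exact wl_nsmul_le S (hFS a (Finset.mem_insert_self a T)) (c a)
          · exact ih (fun s hs => hFS s (Finset.mem_insert_of_mem hs))

lemma int_mono_bdd_ev_const (f : ℕ → ℤ) (hm : Monotone f) (C : ℤ) (hb : ∀ n, f n ≤ C) :
    ∃ m : ℤ, ∃ N : ℕ, ∀ n, N ≤ n → f n = m := by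
  set g : ℕ → ℕ := fun n => (f n - f 0).toNat with hg
  have hgm : Monotone g := fun a b hab => by
    simp only [hg]
    exact Int.toNat_le_toNat (by linarith [hm hab])
  have hgb : BddAbove (Set.range g) := by
    refine ⟨(C - f 0).toNat, ?_⟩
    rintro _ ⟨n, rfl⟩
    exact Int.toNat_le_toNat (by linarith [hb n])
  have hmem := Nat.sSup_mem (Set.range_nonempty g) hgb
  obtain ⟨N, hN⟩ := hmem
  refine ⟨f N, N, fun n hn => ?_⟩
  have h1 : g n ≤ g N := hN ▸ le_csSup hgb ⟨n, rfl⟩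
  have h2 : g N ≤ g n := hgm hn
  have h3 : g n = g N := le_antisymm h1 h2
  have h4 : f n - f 0 = f N - f 0 := by
    have e1 : ((g n : ℤ)) = f n - f 0 := Int.toNat_of_nonneg (by linarith [hm (Nat.zero_le n)])
    have e2 : ((g N : ℤ)) = f N - f 0 := Int.toNat_of_nonneg (by linarith [hm (Nat.zero_le N)])
    rw [← e1, ← e2, h3]
  linarith

end Aux

set_option maxHeartbeats 1000000 in
/-- Proposition 8.4 of Rieffel: with `F`, `z_F`, `G_F` as for a face of the convex hull
of `S`, for any `y ∈ ℤ^d` and `u ∈ G_F`, the sequences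
`n ↦ ℓ_S(n·z_F) − ℓ_S(n·z_F − y)` and `n ↦ ℓ_S(n·z_F) − ℓ_S(n·z_F − y − u)` are
eventually constant with eventual values `m(y)`, `m(y+u)` satisfying
`m(y+u) = m(y) + σ(u)`; that is, `φ_{y+u}(b_F) = φ_y(b_F) + σ(u)`. -/
theorem stmt16 {d : ℕ} (S : Finset (Fin d → ℤ))
    (hSsym : ∀ s ∈ S, -s ∈ S) (hS0 : (0 : Fin d → ℤ) ∉ S)
    (hSgen : AddSubgroup.closure (S : Set (Fin d → ℤ)) = ⊤)
    (σ : (Fin d → ℝ) →ₗ[ℝ] ℝ)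
    (hσ : ∀ s ∈ S, σ (fun i => (s i : ℝ)) ≤ 1)
    (F : Finset (Fin d → ℤ))
    (hF : ∀ s : Fin d → ℤ, s ∈ F ↔ s ∈ S ∧ σ (fun i => (s i : ℝ)) = 1)
    (hFne : F.Nonempty)
    (zF : Fin d → ℤ) (hzF : zF = ∑ s ∈ F, s) :
    ∀ y : Fin d → ℤ, ∀ u ∈ AddSubgroup.closure (F : Set (Fin d → ℤ)),
      ∃ (my myu : ℤ) (N : ℕ),
        (∀ n : ℕ, N ≤ n →
          (wordLength S (n • zF) : ℤ) - (wordLength S (n • zF - y) : ℤ) = my ∧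
          (wordLength S (n • zF) : ℤ) - (wordLength S (n • zF - y - u) : ℤ) = myu) ∧
        (myu : ℝ) = (my : ℝ) + σ (fun i => (u i : ℝ)) := by
  classical
  intro y u hu
  set τ : (Fin d → ℤ) →+ ℝ := σ.toAddMonoidHom.comp (icastHom d) with hτdef
  have hτ : ∀ x : Fin d → ℤ, τ x = σ (fun i => (x i : ℝ)) := fun x => rfl
  have hFS : ∀ s ∈ F, s ∈ S := fun s hs => ((hF s).mp hs).1
  have hτF : ∀ s ∈ F, τ s = 1 := fun s hs => by rw [hτ]; exact ((hF s).mp hs).2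
  have hτS : ∀ s ∈ S, τ s ≤ 1 := fun s hs => by rw [hτ]; exact hσ s hs
  -- lower bound: τ x ≤ wordLength x
  have tau_le : ∀ x : Fin d → ℤ, τ x ≤ (wordLength S x : ℝ) := by
    intro x
    obtain ⟨g, hg, hgs⟩ := wl_spec S hSsym hSgen x
    calc τ x = τ (∑ i, g i) := by rw [hgs]
      _ = ∑ i, τ (g i) := map_sum τ g Finset.univ
      _ ≤ ∑ _i : Fin (wordLength S x), (1 : ℝ) :=
          Finset.sum_le_sum fun i _ => hτS _ (hg i)
      _ = (wordLength S x : ℝ) := by simp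
  have hτz : τ zF = (F.card : ℝ) := by
    rw [hzF, map_sum, Finset.sum_congr rfl (fun s hs => hτF s hs)]
    simp
  -- word length of n • zF is exactly n * |F|
  have wl_zF_le : wordLength S zF ≤ F.card := by
    have := wl_sum_smul_le S hFS (fun _ => 1) hSsym hSgen
    simpa [hzF] using this
  have wlz : ∀ n : ℕ, (wordLength S (n • zF) : ℤ) = n * F.card := by
    intro n
    have hub : wordLength S (n • zF) ≤ n * F.card := by
      have h1 : n • zF = ∑ s ∈ F, n • s := by rw [hzF, Finset.smul_sum]
      have h2 := wl_sum_smul_le S hFS (fun _ => n) hSsym hSgen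
      rw [← h1] at h2
      simpa [Finset.sum_const, smul_eq_mul, mul_comm] using h2
    have hlb : (n * F.card : ℝ) ≤ (wordLength S (n • zF) : ℝ) := by
      have := tau_le (n • zF)
      rwa [map_nsmul, hτz, nsmul_eq_mul] at this
    have hlb' : n * F.card ≤ wordLength S (n • zF) := by exact_mod_cast hlb
    omega
  -- the sequence n ↦ n*|F| - ℓ(n•zF - v) is monotone and bounded above
  have evConst : ∀ v : Fin d → ℤ, ∃ m : ℤ, ∃ N : ℕ, ∀ n, N ≤ n →
      (n : ℤ) * F.card - (wordLength S (n • zF - v) : ℤ) = m := by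
    intro v
    set f : ℕ → ℤ := fun n => (n : ℤ) * F.card - (wordLength S (n • zF - v) : ℤ) with hf
    have hmono : Monotone f := by
      apply monotone_nat_of_le_succ
      intro n
      have hstep : wordLength S ((n + 1) • zF - v) ≤ wordLength S (n • zF - v) + F.card := by
        have he : (n + 1) • zF - v = (n • zF - v) + zF := by
          rw [add_nsmul, one_nsmul]; abel
        rw [he]
        calc wordLength S ((n • zF - v) + zF)
            ≤ wordLength S (n • zF - v) + wordLength S zF := wl_add S hSsym hSgen _ _
          _ ≤ wordLength S (n • zF - v) + F.card := by omega
      have hstep' : ((wordLength S ((n + 1) • zF - v)) : ℤ)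
          ≤ (wordLength S (n • zF - v) : ℤ) + F.card := by exact_mod_cast hstep
      simp only [hf]
      push_cast
      linarith
    have hbdd : ∀ n, f n ≤ ⌈τ v⌉ := by
      intro n
      have h1 : τ (n • zF - v) ≤ (wordLength S (n • zF - v) : ℝ) := tau_le _
      rw [map_sub, map_nsmul, hτz, nsmul_eq_mul] at h1
      have h2 : (f n : ℝ) ≤ τ v := by
        simp only [hf]
        push_cast
        linarith
      have := h2.trans (Int.le_ceil (τ v))
      exact_mod_cast this
    exact int_mono_bdd_ev_const f hmono _ hbdd
  -- decomposition of u as difference of nonnegative combinations of F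
  obtain ⟨a, b, hab⟩ : ∃ a b : (Fin d → ℤ) → ℕ,
      u = ∑ s ∈ F, (((a s : ℤ) - (b s : ℤ)) • s) := by
    induction hu using AddSubgroup.closure_induction with
    | mem s hs =>
      refine ⟨fun t => if t = s then 1 else 0, fun _ => 0, ?_⟩
      rw [Finset.sum_congr rfl (g := fun t => if t = s then t else 0)
        (fun t _ => by by_cases h : t = s <;> simp [h])]
      simp [Finset.mem_coe.mp hs]
    | zero => exact ⟨0, 0, by simp⟩
    | add x y _ _ hx hy =>
      obtain ⟨ax, bx, hx⟩ := hx
      obtain ⟨ay, by', hy⟩ := hy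
      refine ⟨ax + ay, bx + by', ?_⟩
      rw [hx, hy, ← Finset.sum_add_distrib]
      refine Finset.sum_congr rfl fun s _ => ?_
      simp only [Pi.add_apply]
      push_cast
      rw [← add_smul]
      ring_nf
    | neg x _ hx =>
      obtain ⟨ax, bx, hx⟩ := hx
      refine ⟨bx, ax, ?_⟩
      rw [hx, ← Finset.sum_neg_distrib]
      refine Finset.sum_congr rfl fun s _ => ?_
      rw [← neg_smul]
      ring_nf
  -- key inequality
  have key : ∀ (Y : Fin d → ℤ) (p q : (Fin d → ℤ) → ℕ) (n : ℕ),
      (wordLength S ((n + ∑ s ∈ F, p s) • zF - (Y + ∑ s ∈ F, (((p s : ℤ) - (q s : ℤ)) • s))) : ℤ)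
        ≤ (wordLength S (n • zF - Y) : ℤ) + (∑ s ∈ F, (p s : ℤ)) * F.card
          - ((∑ s ∈ F, (p s : ℤ)) - (∑ s ∈ F, (q s : ℤ))) := by
    intro Y p q n
    set A : ℕ := ∑ s ∈ F, p s with hA
    have hpA : ∀ s ∈ F, p s ≤ A := fun s hs => Finset.single_le_sum (fun _ _ => Nat.zero_le _) hs
    set e : (Fin d → ℤ) → ℕ := fun s => A - p s + q s with he
    have hecast : ∀ s ∈ F, ((e s : ℤ)) = (A : ℤ) - p s + q s := by
      intro s hs
      simp only [he]
      push_cast [Nat.cast_sub (hpA s hs)]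
      ring
    have hw : ∑ s ∈ F, e s • s
        = A • zF - ∑ s ∈ F, (((p s : ℤ) - (q s : ℤ)) • s) := by
      rw [hzF, Finset.smul_sum, ← Finset.sum_sub_distrib]
      refine Finset.sum_congr rfl fun s hs => ?_
      rw [← natCast_zsmul s (e s), hecast s hs, ← natCast_zsmul s A, ← sub_smul]
      congr 1
      ring
    have heq : (n + A) • zF - (Y + ∑ s ∈ F, (((p s : ℤ) - (q s : ℤ)) • s))
        = (n • zF - Y) + ∑ s ∈ F, e s • s := by
      rw [hw, add_nsmul]; abel
    have hsum_e : ((∑ s ∈ F, e s : ℕ) : ℤ)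
        = (A : ℤ) * F.card - ((∑ s ∈ F, (p s : ℤ)) - (∑ s ∈ F, (q s : ℤ))) := by
      push_cast
      rw [Finset.sum_congr rfl hecast]
      rw [Finset.sum_add_distrib, Finset.sum_sub_distrib, Finset.sum_const]
      push_cast
      ring
    have hle : wordLength S ((n + A) • zF - (Y + ∑ s ∈ F, (((p s : ℤ) - (q s : ℤ)) • s)))
        ≤ wordLength S (n • zF - Y) + ∑ s ∈ F, e s := by
      rw [heq]
      calc wordLength S ((n • zF - Y) + ∑ s ∈ F, e s • s)
          ≤ wordLength S (n • zF - Y) + wordLength S (∑ s ∈ F, e s • s) :=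
            wl_add S hSsym hSgen _ _
        _ ≤ wordLength S (n • zF - Y) + ∑ s ∈ F, e s := by
            have := wl_sum_smul_le S hFS e hSsym hSgen
            omega
    have := hle
    have hc : ((wordLength S ((n + A) • zF - (Y + ∑ s ∈ F, (((p s : ℤ) - (q s : ℤ)) • s)))) : ℤ)
        ≤ (wordLength S (n • zF - Y) : ℤ) + ((∑ s ∈ F, e s : ℕ) : ℤ) := by exact_mod_cast hle
    rw [hsum_e] at hc
    have hAc : (A : ℤ) = ∑ s ∈ F, (p s : ℤ) := by rw [hA]; push_cast; rfl
    rw [hAc] at hc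
    linarith
  -- σ(u) = A - B
  have hτu : τ u = ((∑ s ∈ F, (a s : ℤ)) - (∑ s ∈ F, (b s : ℤ)) : ℤ) := by
    rw [hab, map_sum]
    rw [Finset.sum_congr rfl (g := fun s => ((a s : ℝ) - (b s : ℝ)))
      (fun s hs => by rw [map_zsmul, hτF s hs, zsmul_eq_mul, mul_one]; push_cast; ring)]
    push_cast
    rw [Finset.sum_sub_distrib]
  -- assemble
  obtain ⟨my, N₁, h₁⟩ := evConst y
  obtain ⟨myu, N₂, h₂⟩ := evConst (y + u)
  have hN₁ : N₁ ≤ max N₁ N₂ := le_max_left _ _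
  have hN₂ : N₂ ≤ max N₁ N₂ := le_max_right _ _
  set N : ℕ := max N₁ N₂ with hN
  have castA : ((N + ∑ s ∈ F, a s : ℕ) : ℤ) = (N : ℤ) + ∑ s ∈ F, (a s : ℤ) := by
    push_cast; rfl
  have castB : ((N + ∑ s ∈ F, b s : ℕ) : ℤ) = (N : ℤ) + ∑ s ∈ F, (b s : ℤ) := by
    push_cast; rfl
  -- myu ≥ my + (A - B)
  have dir1 : my + ((∑ s ∈ F, (a s : ℤ)) - ∑ s ∈ F, (b s : ℤ)) ≤ myu := by
    have hk := key y a b N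
    rw [← hab] at hk
    have e1 := h₁ N hN₁
    have e2 := h₂ (N + ∑ s ∈ F, a s) (le_trans hN₂ (Nat.le_add_right N _))
    rw [castA] at e2
    linarith [hk, e1, e2]
  have dir2 : myu ≤ my + ((∑ s ∈ F, (a s : ℤ)) - ∑ s ∈ F, (b s : ℤ)) := by
    have hk := key (y + u) b a N
    have hnegu : ∑ s ∈ F, (((b s : ℤ) - (a s : ℤ)) • s) = -u := by
      rw [hab, ← Finset.sum_neg_distrib]
      refine Finset.sum_congr rfl fun s _ => ?_
      rw [← neg_smul]; ring_nf
    rw [hnegu] at hk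
    have hyy : y + u + -u = y := by abel
    rw [hyy] at hk
    have e1 := h₂ N hN₂
    have e2 := h₁ (N + ∑ s ∈ F, b s) (le_trans hN₁ (Nat.le_add_right N _))
    rw [castB] at e2
    linarith [hk, e1, e2]
  have hmyu : myu = my + ((∑ s ∈ F, (a s : ℤ)) - ∑ s ∈ F, (b s : ℤ)) :=
    le_antisymm dir2 dir1
  refine ⟨my, myu, N, fun n hn => ?_, ?_⟩
  · constructor
    · rw [wlz n, h₁ n (le_trans hN₁ hn)]
    · rw [wlz n, sub_sub, h₂ n (le_trans hN₂ hn)]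
  · rw [← hτ, hτu, hmyu]
    push_cast
    ring
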